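/- The Hilbert–Samuel sequence of the local K-algebra A = K[t,s]/(t^5, t^4 − t^2 s, s^2) with maximal ideal m = (t,s) is (1, 2, 2, 1, 1), i.e., dim_K m^0/m^1 = 1, dim_K m/m^2 = 2, dim_K m^2/m^3 = 2, dim_K m^3/m^4 = 1, dim_K m^4/m^5 = 1, and m^5 = 0. -/

import Mathlib

open MvPolynomial

set_option maxHeartbeats 1000000
set_option synthInstance.maxHeartbeats 800000
set_option linter.unreachableTactic false
set_option linter.unusedTactic false

namespace Stmt15

open TrivSqZeroExt

noncomputable section

variable (K : Type*) [Field K]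

abbrev Rg : Type _ := AdjoinRoot (Polynomial.X ^ 4 : Polynomial K)

abbrev yy : Rg K := AdjoinRoot.root _

lemma hy4 : yy K ^ 4 = 0 := by
  rw [yy, ← AdjoinRoot.mk_X, ← map_pow, AdjoinRoot.mk_self]

lemma hy5 : yy K ^ 5 = 0 := by rw [pow_succ, hy4, zero_mul]

abbrev Ty : DualNumber (Rg K) := inl (yy K) + inr 1
abbrev Sy : DualNumber (Rg K) := inr ((4 : K) • yy K)

lemma hTy2 : Ty K ^ 2 = inl (yy K ^ 2) + inr ((2 : K) • yy K) := by
  ext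
  · simp [fst_pow]
  · simp [snd_pow, smul_smul]
    rw [Algebra.smul_def, map_ofNat]

lemma hTy3 : Ty K ^ 3 = inl (yy K ^ 3) + inr ((3 : K) • yy K ^ 2) := by
  ext
  · simp [fst_pow]
  · simp [snd_pow, smul_smul]
    rw [Algebra.smul_def, map_ofNat]

lemma hTy4 : Ty K ^ 4 = inr ((4 : K) • yy K ^ 3) := by
  ext
  · simp [fst_pow, hy4]
  · simp [snd_pow, smul_smul]
    rw [Algebra.smul_def, map_ofNat]

lemma hTy5 : Ty K ^ 5 = 0 := by
  ext
  · simp [fst_pow, hy5]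
  · simp [snd_pow, smul_smul, hy4]

lemma hTySy : Ty K * Sy K = inr ((4 : K) • yy K ^ 2) := by
  rw [add_mul, inl_mul_inr, inr_mul_inr, add_zero, smul_comm, smul_eq_mul, ← pow_two]

lemma hSy2 : Sy K * Sy K = 0 := by rw [inr_mul_inr]

lemma hTy2Sy : Ty K ^ 2 * Sy K = inr ((4 : K) • yy K ^ 3) := by
  rw [hTy2, add_mul, inl_mul_inr, inr_mul_inr, add_zero, smul_comm, smul_eq_mul, ← pow_succ]

abbrev Bg : Type _ := DualNumber (Rg K) × DualNumber K

abbrev Tel : Bg K := (Ty K, 0)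
abbrev Sel : Bg K := (Sy K, DualNumber.eps)

lemma hTel5 : Tel K ^ 5 = 0 := by
  rw [Prod.pow_mk, hTy5]
  norm_num

lemma hSel2 : Sel K ^ 2 = 0 := by
  rw [Prod.pow_mk, pow_two, hSy2, pow_two, DualNumber.eps_mul_eps]
  rfl

lemma hTelrel : Tel K ^ 4 - Tel K ^ 2 * Sel K = 0 := by
  rw [Prod.pow_mk, Prod.pow_mk, Prod.mk_mul_mk, hTy4, hTy2Sy]
  norm_num

abbrev PP := MvPolynomial (Fin 2) K

abbrev II : Ideal (PP K) := Ideal.span {X 0 ^ 5, X 0 ^ 4 - X 0 ^ 2 * X 1, X 1 ^ 2}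

abbrev AA := PP K ⧸ II K

abbrev tee : AA K := Ideal.Quotient.mk (II K) (X 0)
abbrev ess : AA K := Ideal.Quotient.mk (II K) (X 1)

abbrev mm : Ideal (AA K) := Ideal.span {tee K, ess K}

abbrev Phi : PP K →ₐ[K] Bg K := aeval ![Tel K, Sel K]

lemma Phi_X0 : Phi K (X 0) = Tel K := by simp [Phi]
lemma Phi_X1 : Phi K (X 1) = Sel K := by simp [Phi]

lemma Phi_vanish : ∀ a ∈ II K, Phi K a = 0 := by
  intro a ha
  have : II K ≤ RingHom.ker (Phi K).toRingHom := by
    rw [Ideal.span_le]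
    rintro g (rfl | rfl | rfl)
    · rw [SetLike.mem_coe, RingHom.mem_ker]
      show Phi K (X 0 ^ 5) = 0
      rw [map_pow, Phi_X0]; exact hTel5 K
    · rw [SetLike.mem_coe, RingHom.mem_ker]
      show Phi K (X 0 ^ 4 - X 0 ^ 2 * X 1) = 0
      rw [map_sub, map_pow, map_mul, map_pow, Phi_X0, Phi_X1]; exact hTelrel K
    · rw [SetLike.mem_coe, RingHom.mem_ker]
      show Phi K (X 1 ^ 2) = 0
      rw [map_pow, Phi_X1]; exact hSel2 K
  exact this ha

abbrev psi : AA K →ₐ[K] Bg K := Ideal.Quotient.liftₐ (II K) (Phi K) (Phi_vanish K)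

lemma psi_t : psi K (tee K) = Tel K := by
  rw [psi, tee, Ideal.Quotient.liftₐ_apply]
  exact Phi_X0 K

lemma psi_s : psi K (ess K) = Sel K := by
  rw [psi, ess, Ideal.Quotient.liftₐ_apply]
  exact Phi_X1 K

-- relations in the quotient algebra
lemma mem1 : (X 0 ^ 5 : PP K) ∈ II K := Ideal.subset_span (Or.inl rfl)
lemma mem2 : (X 0 ^ 4 - X 0 ^ 2 * X 1 : PP K) ∈ II K :=
  Ideal.subset_span (Or.inr (Or.inl rfl))
lemma mem3 : (X 1 ^ 2 : PP K) ∈ II K := Ideal.subset_span (Or.inr (Or.inr rfl))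
lemma mem4 : (X 0 ^ 3 * X 1 : PP K) ∈ II K := by
  have h : (X 0 ^ 3 * X 1 : PP K) = X 0 ^ 5 - X 0 * (X 0 ^ 4 - X 0 ^ 2 * X 1) := by ring
  rw [h]
  exact sub_mem (mem1 K) (Ideal.mul_mem_left _ _ (mem2 K))

lemma Es2 : ess K ^ 2 = 0 := by
  rw [ess, ← map_pow, Ideal.Quotient.eq_zero_iff_mem]; exact mem3 K

lemma Et5 : tee K ^ 5 = 0 := by
  rw [tee, ← map_pow, Ideal.Quotient.eq_zero_iff_mem]; exact mem1 K

lemma Et2s : tee K ^ 2 * ess K = tee K ^ 4 := by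
  rw [tee, ess, ← map_pow, ← map_mul, ← map_pow, Ideal.Quotient.mk_eq_mk_iff_sub_mem]
  have h : (X 0 ^ 2 * X 1 - X 0 ^ 4 : PP K) = -(X 0 ^ 4 - X 0 ^ 2 * X 1) := by ring
  rw [h]
  exact neg_mem (mem2 K)

lemma Et3s : tee K ^ 3 * ess K = 0 := by
  rw [tee, ess, ← map_pow, ← map_mul, Ideal.Quotient.eq_zero_iff_mem]; exact mem4 K

lemma Et4s : tee K ^ 4 * ess K = 0 := by
  have h : tee K ^ 4 * ess K = tee K * (tee K ^ 3 * ess K) := by ring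
  rw [h, Et3s, mul_zero]

-- spanning sets
abbrev S0 : Set (AA K) :=
  {1, tee K, ess K, tee K ^ 2, tee K * ess K, tee K ^ 3, tee K ^ 4}
abbrev S1 : Set (AA K) :=
  {tee K, ess K, tee K ^ 2, tee K * ess K, tee K ^ 3, tee K ^ 4}
abbrev S2 : Set (AA K) := {tee K ^ 2, tee K * ess K, tee K ^ 3, tee K ^ 4}
abbrev S3 : Set (AA K) := {tee K ^ 3, tee K ^ 4}
abbrev S4 : Set (AA K) := {tee K ^ 4}

lemma memS0_one : (1 : AA K) ∈ S0 K := Or.inl rfl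
lemma memS0_t : (tee K : AA K) ∈ S0 K := Or.inr (Or.inl rfl)
lemma memS0_s : (ess K : AA K) ∈ S0 K := Or.inr (Or.inr (Or.inl rfl))
lemma memS0_t2 : (tee K ^ 2 : AA K) ∈ S0 K := Or.inr (Or.inr (Or.inr (Or.inl rfl)))
lemma memS0_ts : (tee K * ess K : AA K) ∈ S0 K := Or.inr (Or.inr (Or.inr (Or.inr (Or.inl rfl))))
lemma memS0_t3 : (tee K ^ 3 : AA K) ∈ S0 K := Or.inr (Or.inr (Or.inr (Or.inr (Or.inr (Or.inl rfl)))))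
lemma memS0_t4 : (tee K ^ 4 : AA K) ∈ S0 K := Or.inr (Or.inr (Or.inr (Or.inr (Or.inr (Or.inr (rfl))))))
lemma memS1_t : (tee K : AA K) ∈ S1 K := Or.inl rfl
lemma memS1_s : (ess K : AA K) ∈ S1 K := Or.inr (Or.inl rfl)
lemma memS1_t2 : (tee K ^ 2 : AA K) ∈ S1 K := Or.inr (Or.inr (Or.inl rfl))
lemma memS1_ts : (tee K * ess K : AA K) ∈ S1 K := Or.inr (Or.inr (Or.inr (Or.inl rfl)))
lemma memS1_t3 : (tee K ^ 3 : AA K) ∈ S1 K := Or.inr (Or.inr (Or.inr (Or.inr (Or.inl rfl))))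
lemma memS1_t4 : (tee K ^ 4 : AA K) ∈ S1 K := Or.inr (Or.inr (Or.inr (Or.inr (Or.inr (rfl)))))
lemma memS2_t2 : (tee K ^ 2 : AA K) ∈ S2 K := Or.inl rfl
lemma memS2_ts : (tee K * ess K : AA K) ∈ S2 K := Or.inr (Or.inl rfl)
lemma memS2_t3 : (tee K ^ 3 : AA K) ∈ S2 K := Or.inr (Or.inr (Or.inl rfl))
lemma memS2_t4 : (tee K ^ 4 : AA K) ∈ S2 K := Or.inr (Or.inr (Or.inr (rfl)))
lemma memS3_t3 : (tee K ^ 3 : AA K) ∈ S3 K := Or.inl rfl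
lemma memS3_t4 : (tee K ^ 4 : AA K) ∈ S3 K := Or.inr (rfl)
lemma memS4_t4 : (tee K ^ 4 : AA K) ∈ S4 K := rfl


lemma htS0 : ∀ g ∈ S0 K, tee K * g ∈ Submodule.span K (S1 K) := by
  intro g hg
  simp only [S0, Set.mem_insert_iff, Set.mem_singleton_iff] at hg
  rcases hg with rfl|rfl|rfl|rfl|rfl|rfl|rfl
  · rw [mul_one]
    exact Submodule.subset_span (memS1_t K)
  · rw [← sq]
    exact Submodule.subset_span (memS1_t2 K)
  · exact Submodule.subset_span (memS1_ts K)
  · rw [show tee K * tee K ^ 2 = tee K ^ 3 from by ring]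
    exact Submodule.subset_span (memS1_t3 K)
  · rw [show tee K * (tee K * ess K) = tee K ^ 2 * ess K from by ring, Et2s]
    exact Submodule.subset_span (memS1_t4 K)
  · rw [show tee K * tee K ^ 3 = tee K ^ 4 from by ring]
    exact Submodule.subset_span (memS1_t4 K)
  · rw [show tee K * tee K ^ 4 = tee K ^ 5 from by ring, Et5]
    exact zero_mem _

lemma hsS0 : ∀ g ∈ S0 K, ess K * g ∈ Submodule.span K (S1 K) := by
  intro g hg
  simp only [S0, Set.mem_insert_iff, Set.mem_singleton_iff] at hg
  rcases hg with rfl|rfl|rfl|rfl|rfl|rfl|rfl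
  · rw [mul_one]
    exact Submodule.subset_span (memS1_s K)
  · rw [mul_comm]
    exact Submodule.subset_span (memS1_ts K)
  · rw [← sq, Es2]
    exact zero_mem _
  · rw [show ess K * tee K ^ 2 = tee K ^ 2 * ess K from by ring, Et2s]
    exact Submodule.subset_span (memS1_t4 K)
  · rw [show ess K * (tee K * ess K) = tee K * ess K ^ 2 from by ring, Es2, mul_zero]
    exact zero_mem _
  · rw [show ess K * tee K ^ 3 = tee K ^ 3 * ess K from by ring, Et3s]
    exact zero_mem _
  · rw [show ess K * tee K ^ 4 = tee K ^ 4 * ess K from by ring, Et4s]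
    exact zero_mem _

lemma htS1 : ∀ g ∈ S1 K, tee K * g ∈ Submodule.span K (S2 K) := by
  intro g hg
  simp only [S1, Set.mem_insert_iff, Set.mem_singleton_iff] at hg
  rcases hg with rfl|rfl|rfl|rfl|rfl|rfl
  · rw [← sq]
    exact Submodule.subset_span (memS2_t2 K)
  · exact Submodule.subset_span (memS2_ts K)
  · rw [show tee K * tee K ^ 2 = tee K ^ 3 from by ring]
    exact Submodule.subset_span (memS2_t3 K)
  · rw [show tee K * (tee K * ess K) = tee K ^ 2 * ess K from by ring, Et2s]
    exact Submodule.subset_span (memS2_t4 K)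
  · rw [show tee K * tee K ^ 3 = tee K ^ 4 from by ring]
    exact Submodule.subset_span (memS2_t4 K)
  · rw [show tee K * tee K ^ 4 = tee K ^ 5 from by ring, Et5]
    exact zero_mem _

lemma hsS1 : ∀ g ∈ S1 K, ess K * g ∈ Submodule.span K (S2 K) := by
  intro g hg
  simp only [S1, Set.mem_insert_iff, Set.mem_singleton_iff] at hg
  rcases hg with rfl|rfl|rfl|rfl|rfl|rfl
  · rw [mul_comm]
    exact Submodule.subset_span (memS2_ts K)
  · rw [← sq, Es2]
    exact zero_mem _
  · rw [show ess K * tee K ^ 2 = tee K ^ 2 * ess K from by ring, Et2s]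
    exact Submodule.subset_span (memS2_t4 K)
  · rw [show ess K * (tee K * ess K) = tee K * ess K ^ 2 from by ring, Es2, mul_zero]
    exact zero_mem _
  · rw [show ess K * tee K ^ 3 = tee K ^ 3 * ess K from by ring, Et3s]
    exact zero_mem _
  · rw [show ess K * tee K ^ 4 = tee K ^ 4 * ess K from by ring, Et4s]
    exact zero_mem _

lemma htS2 : ∀ g ∈ S2 K, tee K * g ∈ Submodule.span K (S3 K) := by
  intro g hg
  simp only [S2, Set.mem_insert_iff, Set.mem_singleton_iff] at hg
  rcases hg with rfl|rfl|rfl|rfl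
  · rw [show tee K * tee K ^ 2 = tee K ^ 3 from by ring]
    exact Submodule.subset_span (memS3_t3 K)
  · rw [show tee K * (tee K * ess K) = tee K ^ 2 * ess K from by ring, Et2s]
    exact Submodule.subset_span (memS3_t4 K)
  · rw [show tee K * tee K ^ 3 = tee K ^ 4 from by ring]
    exact Submodule.subset_span (memS3_t4 K)
  · rw [show tee K * tee K ^ 4 = tee K ^ 5 from by ring, Et5]
    exact zero_mem _

lemma hsS2 : ∀ g ∈ S2 K, ess K * g ∈ Submodule.span K (S3 K) := by
  intro g hg
  simp only [S2, Set.mem_insert_iff, Set.mem_singleton_iff] at hg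
  rcases hg with rfl|rfl|rfl|rfl
  · rw [show ess K * tee K ^ 2 = tee K ^ 2 * ess K from by ring, Et2s]
    exact Submodule.subset_span (memS3_t4 K)
  · rw [show ess K * (tee K * ess K) = tee K * ess K ^ 2 from by ring, Es2, mul_zero]
    exact zero_mem _
  · rw [show ess K * tee K ^ 3 = tee K ^ 3 * ess K from by ring, Et3s]
    exact zero_mem _
  · rw [show ess K * tee K ^ 4 = tee K ^ 4 * ess K from by ring, Et4s]
    exact zero_mem _

lemma htS3 : ∀ g ∈ S3 K, tee K * g ∈ Submodule.span K (S4 K) := by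
  intro g hg
  simp only [S3, Set.mem_insert_iff, Set.mem_singleton_iff] at hg
  rcases hg with rfl|rfl
  · rw [show tee K * tee K ^ 3 = tee K ^ 4 from by ring]
    exact Submodule.subset_span (memS4_t4 K)
  · rw [show tee K * tee K ^ 4 = tee K ^ 5 from by ring, Et5]
    exact zero_mem _

lemma hsS3 : ∀ g ∈ S3 K, ess K * g ∈ Submodule.span K (S4 K) := by
  intro g hg
  simp only [S3, Set.mem_insert_iff, Set.mem_singleton_iff] at hg
  rcases hg with rfl|rfl
  · rw [show ess K * tee K ^ 3 = tee K ^ 3 * ess K from by ring, Et3s]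
    exact zero_mem _
  · rw [show ess K * tee K ^ 4 = tee K ^ 4 * ess K from by ring, Et4s]
    exact zero_mem _

lemma htS4 : ∀ g ∈ S4 K, tee K * g = 0 := by
  intro g hg
  simp only [S4, Set.mem_singleton_iff] at hg
  subst hg
  rw [show tee K * tee K ^ 4 = tee K ^ 5 from by ring, Et5]

lemma hsS4 : ∀ g ∈ S4 K, ess K * g = 0 := by
  intro g hg
  simp only [S4, Set.mem_singleton_iff] at hg
  subst hg
  rw [show ess K * tee K ^ 4 = tee K ^ 4 * ess K from by ring, Et4s]

abbrev S5 : Set (AA K) := (∅ : Set (AA K))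

lemma mulspan (c : AA K) (Sa Sb : Set (AA K))
    (h : ∀ g ∈ Sa, c * g ∈ Submodule.span K Sb) :
    ∀ w ∈ Submodule.span K Sa, c * w ∈ Submodule.span K Sb := by
  intro w hw
  induction hw using Submodule.span_induction with
  | mem x hx => exact h x hx
  | zero => rw [mul_zero]; exact zero_mem _
  | add x y hx hy ihx ihy => rw [mul_add]; exact add_mem ihx ihy
  | smul a x hx ih => rw [mul_smul_comm]; exact Submodule.smul_mem _ _ ih

lemma rclose (S : Set (AA K))
    (hT : ∀ g ∈ S, tee K * g ∈ Submodule.span K S)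
    (hS : ∀ g ∈ S, ess K * g ∈ Submodule.span K S) :
    ∀ (r w : AA K), w ∈ Submodule.span K S → r * w ∈ Submodule.span K S := by
  intro r w hw
  obtain ⟨p, rfl⟩ := Ideal.Quotient.mk_surjective r
  induction p using MvPolynomial.induction_on generalizing w with
  | C a =>
      rw [← MvPolynomial.algebraMap_eq, Ideal.Quotient.mk_algebraMap, ← Algebra.smul_def]
      exact Submodule.smul_mem _ _ hw
  | add p q ihp ihq =>
      rw [map_add, add_mul]
      exact add_mem (ihp w hw) (ihq w hw)
  | mul_X p n ih =>
      rw [map_mul, mul_assoc]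
      have hx : Ideal.Quotient.mk (II K) (X n) * w ∈ Submodule.span K S := by
        fin_cases n
        · exact mulspan K (tee K) S S hT w hw
        · exact mulspan K (ess K) S S hS w hw
      exact ih _ hx

lemma sub10 : S1 K ⊆ S0 K := fun _ hx => Or.inr hx
lemma sub21 : S2 K ⊆ S1 K := fun _ hx => Or.inr (Or.inr hx)
lemma sub32 : S3 K ⊆ S2 K := fun _ hx => Or.inr (Or.inr hx)
lemma sub43 : S4 K ⊆ S3 K := fun _ hx => Or.inr hx

lemma htS0' : ∀ g ∈ S0 K, tee K * g ∈ Submodule.span K (S0 K) :=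
  fun g hg => Submodule.span_mono (sub10 K) (htS0 K g hg)
lemma hsS0' : ∀ g ∈ S0 K, ess K * g ∈ Submodule.span K (S0 K) :=
  fun g hg => Submodule.span_mono (sub10 K) (hsS0 K g hg)
lemma htS1' : ∀ g ∈ S1 K, tee K * g ∈ Submodule.span K (S1 K) :=
  fun g hg => Submodule.span_mono (sub21 K) (htS1 K g hg)
lemma hsS1' : ∀ g ∈ S1 K, ess K * g ∈ Submodule.span K (S1 K) :=
  fun g hg => Submodule.span_mono (sub21 K) (hsS1 K g hg)
lemma htS2' : ∀ g ∈ S2 K, tee K * g ∈ Submodule.span K (S2 K) :=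
  fun g hg => Submodule.span_mono (sub32 K) (htS2 K g hg)
lemma hsS2' : ∀ g ∈ S2 K, ess K * g ∈ Submodule.span K (S2 K) :=
  fun g hg => Submodule.span_mono (sub32 K) (hsS2 K g hg)
lemma htS3' : ∀ g ∈ S3 K, tee K * g ∈ Submodule.span K (S3 K) :=
  fun g hg => Submodule.span_mono (sub43 K) (htS3 K g hg)
lemma hsS3' : ∀ g ∈ S3 K, ess K * g ∈ Submodule.span K (S3 K) :=
  fun g hg => Submodule.span_mono (sub43 K) (hsS3 K g hg)
lemma htS4' : ∀ g ∈ S4 K, tee K * g ∈ Submodule.span K (S4 K) := by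
  intro g hg; rw [htS4 K g hg]; exact zero_mem _
lemma hsS4' : ∀ g ∈ S4 K, ess K * g ∈ Submodule.span K (S4 K) := by
  intro g hg; rw [hsS4 K g hg]; exact zero_mem _
lemma htS45 : ∀ g ∈ S4 K, tee K * g ∈ Submodule.span K (S5 K) := by
  intro g hg; rw [htS4 K g hg]; exact zero_mem _
lemma hsS45 : ∀ g ∈ S4 K, ess K * g ∈ Submodule.span K (S5 K) := by
  intro g hg; rw [hsS4 K g hg]; exact zero_mem _

lemma rcl0 : ∀ (r w : AA K), w ∈ Submodule.span K (S0 K) → r * w ∈ Submodule.span K (S0 K) :=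
  rclose K (S0 K) (htS0' K) (hsS0' K)
lemma rcl1 : ∀ (r w : AA K), w ∈ Submodule.span K (S1 K) → r * w ∈ Submodule.span K (S1 K) :=
  rclose K (S1 K) (htS1' K) (hsS1' K)
lemma rcl2 : ∀ (r w : AA K), w ∈ Submodule.span K (S2 K) → r * w ∈ Submodule.span K (S2 K) :=
  rclose K (S2 K) (htS2' K) (hsS2' K)
lemma rcl3 : ∀ (r w : AA K), w ∈ Submodule.span K (S3 K) → r * w ∈ Submodule.span K (S3 K) :=
  rclose K (S3 K) (htS3' K) (hsS3' K)
lemma rcl4 : ∀ (r w : AA K), w ∈ Submodule.span K (S4 K) → r * w ∈ Submodule.span K (S4 K) :=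
  rclose K (S4 K) (htS4' K) (hsS4' K)
lemma rcl5 : ∀ (r w : AA K), w ∈ Submodule.span K (S5 K) → r * w ∈ Submodule.span K (S5 K) := by
  intro r w hw
  rw [S5, Submodule.span_empty] at hw ⊢
  rw [Submodule.mem_bot] at hw
  rw [hw, mul_zero]
  exact Submodule.mem_bot K |>.mpr rfl

lemma span_top : ∀ x : AA K, x ∈ Submodule.span K (S0 K) := by
  intro x
  obtain ⟨p, rfl⟩ := Ideal.Quotient.mk_surjective x
  induction p using MvPolynomial.induction_on with
  | C a =>
      rw [← MvPolynomial.algebraMap_eq, Ideal.Quotient.mk_algebraMap, Algebra.algebraMap_eq_smul_one]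
      exact Submodule.smul_mem _ _ (Submodule.subset_span (memS0_one K))
  | add p q ihp ihq => rw [map_add]; exact add_mem ihp ihq
  | mul_X p n ih =>
      rw [map_mul, mul_comm]
      exact rcl0 K _ _ ih

lemma Lstep (Sa Sb : Set (AA K)) (Mi : Ideal (AA K))
    (hT : ∀ g ∈ Sa, tee K * g ∈ Submodule.span K Sb)
    (hS : ∀ g ∈ Sa, ess K * g ∈ Submodule.span K Sb)
    (rclb : ∀ (r w : AA K), w ∈ Submodule.span K Sb → r * w ∈ Submodule.span K Sb)
    (prev : ∀ x ∈ Mi, x ∈ Submodule.span K Sa) :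
    ∀ x ∈ Mi * mm K, x ∈ Submodule.span K Sb := by
  intro x hx
  refine Submodule.mul_induction_on hx ?_ (fun a b ha hb => add_mem ha hb)
  intro p hp q hq
  have hp' : p ∈ Submodule.span K Sa := prev p hp
  induction hq using Submodule.span_induction with
  | mem g hg =>
      rcases hg with rfl | rfl
      · rw [mul_comm]; exact mulspan K (tee K) Sa Sb hT p hp'
      · rw [mul_comm]; exact mulspan K (ess K) Sa Sb hS p hp'
  | zero => rw [mul_zero]; exact zero_mem _
  | add a b ha hb iha ihb => rw [mul_add]; exact add_mem iha ihb
  | smul a q hq ih =>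
      rw [smul_eq_mul, show p * (a * q) = a * (p * q) from by ring]
      exact rclb a _ ih

lemma L1 : ∀ x ∈ mm K, x ∈ Submodule.span K (S1 K) := by
  intro x hx
  induction hx using Submodule.span_induction with
  | mem g hg =>
      rcases hg with rfl | rfl
      · exact Submodule.subset_span (memS1_t K)
      · exact Submodule.subset_span (memS1_s K)
  | zero => exact zero_mem _
  | add a b ha hb iha ihb => exact add_mem iha ihb
  | smul a x hx ih => rw [smul_eq_mul]; exact rcl1 K a x ih

lemma L2 : ∀ x ∈ mm K ^ 2, x ∈ Submodule.span K (S2 K) := by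
  rw [pow_two]
  exact Lstep K (S1 K) (S2 K) (mm K) (htS1 K) (hsS1 K) (rcl2 K) (L1 K)

lemma L3 : ∀ x ∈ mm K ^ 3, x ∈ Submodule.span K (S3 K) := by
  rw [pow_succ]
  exact Lstep K (S2 K) (S3 K) (mm K ^ 2) (htS2 K) (hsS2 K) (rcl3 K) (L2 K)

lemma L4 : ∀ x ∈ mm K ^ 4, x ∈ Submodule.span K (S4 K) := by
  rw [pow_succ]
  exact Lstep K (S3 K) (S4 K) (mm K ^ 3) (htS3 K) (hsS3 K) (rcl4 K) (L3 K)

lemma L5 : ∀ x ∈ mm K ^ 5, x ∈ Submodule.span K (S5 K) := by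
  rw [pow_succ]
  exact Lstep K (S4 K) (S5 K) (mm K ^ 4) (htS45 K) (hsS45 K) (rcl5 K) (L4 K)

lemma mm_pow5 : mm K ^ 5 = ⊥ := by
  rw [eq_bot_iff]
  intro x hx
  have := L5 K x hx
  rw [S5, Submodule.span_empty, Submodule.mem_bot] at this
  rw [this]
  exact Submodule.zero_mem ⊥

lemma ht_mm : tee K ∈ mm K := Ideal.subset_span (Or.inl rfl)
lemma hs_mm : ess K ∈ mm K := Ideal.subset_span (Or.inr rfl)

lemma hK0 : Submodule.restrictScalars K (mm K ^ 0) = Submodule.span K (S0 K) := by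
  apply le_antisymm
  · intro x _
    exact span_top K x
  · intro x _
    rw [Submodule.restrictScalars_mem, pow_zero, Ideal.one_eq_top]
    trivial

lemma hK1 : Submodule.restrictScalars K (mm K ^ 1) = Submodule.span K (S1 K) := by
  apply le_antisymm
  · intro x hx
    rw [Submodule.restrictScalars_mem, pow_one] at hx
    exact L1 K x hx
  · rw [Submodule.span_le]
    intro g hg
    simp only [SetLike.mem_coe, Submodule.restrictScalars_mem, pow_one]
    rcases hg with rfl | rfl | rfl | rfl | rfl | rfl
    · exact ht_mm K
    · exact hs_mm K
    · rw [pow_two]; exact Ideal.mul_mem_left _ _ (ht_mm K)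
    · exact Ideal.mul_mem_left _ _ (hs_mm K)
    · rw [pow_succ]; exact Ideal.mul_mem_left _ _ (ht_mm K)
    · rw [pow_succ]; exact Ideal.mul_mem_left _ _ (ht_mm K)

lemma hK2 : Submodule.restrictScalars K (mm K ^ 2) = Submodule.span K (S2 K) := by
  apply le_antisymm
  · intro x hx
    rw [Submodule.restrictScalars_mem] at hx
    exact L2 K x hx
  · rw [Submodule.span_le]
    intro g hg
    simp only [SetLike.mem_coe, Submodule.restrictScalars_mem]
    rcases hg with rfl | rfl | rfl | rfl
    · exact Ideal.pow_mem_pow (ht_mm K) 2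
    · rw [pow_two]; exact Ideal.mul_mem_mul (ht_mm K) (hs_mm K)
    · exact Ideal.pow_le_pow_right (by norm_num) (Ideal.pow_mem_pow (ht_mm K) 3)
    · exact Ideal.pow_le_pow_right (by norm_num) (Ideal.pow_mem_pow (ht_mm K) 4)

lemma hK3 : Submodule.restrictScalars K (mm K ^ 3) = Submodule.span K (S3 K) := by
  apply le_antisymm
  · intro x hx
    rw [Submodule.restrictScalars_mem] at hx
    exact L3 K x hx
  · rw [Submodule.span_le]
    intro g hg
    simp only [SetLike.mem_coe, Submodule.restrictScalars_mem]
    rcases hg with rfl | rfl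
    · exact Ideal.pow_mem_pow (ht_mm K) 3
    · exact Ideal.pow_le_pow_right (by norm_num) (Ideal.pow_mem_pow (ht_mm K) 4)

lemma hK4 : Submodule.restrictScalars K (mm K ^ 4) = Submodule.span K (S4 K) := by
  apply le_antisymm
  · intro x hx
    rw [Submodule.restrictScalars_mem] at hx
    exact L4 K x hx
  · rw [Submodule.span_le]
    intro g hg
    simp only [SetLike.mem_coe, Submodule.restrictScalars_mem]
    rcases hg with rfl
    exact Ideal.pow_mem_pow (ht_mm K) 4


def cf (j : ℕ) : Rg K →ₗ[K] K :=
  (Polynomial.lcoeff K j) ∘ₗ (AdjoinRoot.modByMonicHom (Polynomial.monic_X_pow 4))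

lemma cf_pow (i j : ℕ) (hi : i < 4) : cf K j (yy K ^ i) = if j = i then 1 else 0 := by
  simp only [cf]
  rw [yy, ← AdjoinRoot.mk_X, ← map_pow, LinearMap.comp_apply,
    AdjoinRoot.modByMonicHom_mk,
    (Polynomial.modByMonic_eq_self_iff (Polynomial.monic_X_pow 4)).mpr
      (by rw [Polynomial.degree_X_pow, Polynomial.degree_X_pow]; exact_mod_cast hi)]
  exact Polynomial.coeff_X_pow i j

abbrev dFst : DualNumber (Rg K) →ₗ[K] Rg K := (fstHom K (Rg K) (Rg K)).toLinearMap
abbrev dSnd : DualNumber (Rg K) →ₗ[K] Rg K := (sndHom (Rg K) (Rg K)).restrictScalars K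
abbrev kFst : DualNumber K →ₗ[K] K := (fstHom K K K).toLinearMap
abbrev kSnd : DualNumber K →ₗ[K] K := sndHom K K

abbrev La (j : ℕ) : Bg K →ₗ[K] K := cf K j ∘ₗ dFst K ∘ₗ LinearMap.fst K _ _
abbrev Lb (j : ℕ) : Bg K →ₗ[K] K := cf K j ∘ₗ dSnd K ∘ₗ LinearMap.fst K _ _
abbrev Lc : Bg K →ₗ[K] K := kFst K ∘ₗ LinearMap.snd K _ _
abbrev Ld : Bg K →ₗ[K] K := kSnd K ∘ₗ LinearMap.snd K _ _
abbrev Le : Bg K →ₗ[K] K := Lb K 2 - (3 : K) • La K 3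

-- values of psi on the basic monomials
lemma psiv1 : psi K (1 : AA K) = (inl 1, inl 1) := by
  rw [map_one]; rfl

lemma psivt : psi K (tee K) = (inl (yy K) + inr 1, 0) := psi_t K

lemma psivs : psi K (ess K) = (inr ((4:K) • yy K), DualNumber.eps) := psi_s K

lemma psivt2 : psi K (tee K ^ 2) = (inl (yy K ^ 2) + inr ((2:K) • yy K), 0) := by
  rw [map_pow, psi_t, Tel, Prod.pow_mk, hTy2]
  norm_num

lemma psivt3 : psi K (tee K ^ 3) = (inl (yy K ^ 3) + inr ((3:K) • yy K ^ 2), 0) := by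
  rw [map_pow, psi_t, Tel, Prod.pow_mk, hTy3]
  norm_num

lemma psivt4 : psi K (tee K ^ 4) = (inr ((4:K) • yy K ^ 3), 0) := by
  rw [map_pow, psi_t, Tel, Prod.pow_mk, hTy4]
  norm_num

lemma psivts : psi K (tee K * ess K) = (inr ((4:K) • yy K ^ 2), 0) := by
  rw [map_mul, psi_t, psi_s, Tel, Sel, Prod.mk_mul_mk, hTySy, zero_mul]


lemma cf_val0 (j : ℕ) : cf K j (1 : Rg K) = if j = 0 then 1 else 0 := by
  have := cf_pow K 0 j (by norm_num); rwa [pow_zero] at this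
lemma cf_val1 (j : ℕ) : cf K j (yy K) = if j = 1 then 1 else 0 := by
  have := cf_pow K 1 j (by norm_num); rwa [pow_one] at this
lemma cf_val2 (j : ℕ) : cf K j (yy K ^ 2) = if j = 2 then 1 else 0 :=
  cf_pow K 2 j (by norm_num)
lemma cf_val3 (j : ℕ) : cf K j (yy K ^ 3) = if j = 3 then 1 else 0 :=
  cf_pow K 3 j (by norm_num)

lemma Ev_Lc_one : Lc K (psi K ((1 : AA K))) = 1 := by
  rw [psiv1]
  simp only [La, Lb, Lc, Ld, Le, DualNumber.eps, LinearMap.comp_apply, LinearMap.fst_apply,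
    LinearMap.snd_apply, LinearMap.restrictScalars_apply, LinearMap.sub_apply, LinearMap.smul_apply,
    AlgHom.toLinearMap_apply, fstHom_apply, sndHom_apply, fst_add, fst_inl, fst_inr,
    snd_add, snd_inl, snd_inr, add_zero, zero_add, map_zero, map_smul, smul_eq_mul,
    cf_val0, cf_val1, cf_val2, cf_val3]
  all_goals norm_num

lemma Ev_Lc_t : Lc K (psi K (tee K)) = 0 := by
  rw [psivt]
  simp only [La, Lb, Lc, Ld, Le, DualNumber.eps, LinearMap.comp_apply, LinearMap.fst_apply,
    LinearMap.snd_apply, LinearMap.restrictScalars_apply, LinearMap.sub_apply, LinearMap.smul_apply,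
    AlgHom.toLinearMap_apply, fstHom_apply, sndHom_apply, fst_add, fst_inl, fst_inr,
    snd_add, snd_inl, snd_inr, add_zero, zero_add, map_zero, map_smul, smul_eq_mul,
    cf_val0, cf_val1, cf_val2, cf_val3]
  all_goals norm_num

lemma Ev_Lc_s : Lc K (psi K (ess K)) = 0 := by
  rw [psivs]
  simp only [La, Lb, Lc, Ld, Le, DualNumber.eps, LinearMap.comp_apply, LinearMap.fst_apply,
    LinearMap.snd_apply, LinearMap.restrictScalars_apply, LinearMap.sub_apply, LinearMap.smul_apply,
    AlgHom.toLinearMap_apply, fstHom_apply, sndHom_apply, fst_add, fst_inl, fst_inr,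
    snd_add, snd_inl, snd_inr, add_zero, zero_add, map_zero, map_smul, smul_eq_mul,
    cf_val0, cf_val1, cf_val2, cf_val3]
  all_goals norm_num

lemma Ev_Lc_t2 : Lc K (psi K (tee K ^ 2)) = 0 := by
  rw [psivt2]
  simp only [La, Lb, Lc, Ld, Le, DualNumber.eps, LinearMap.comp_apply, LinearMap.fst_apply,
    LinearMap.snd_apply, LinearMap.restrictScalars_apply, LinearMap.sub_apply, LinearMap.smul_apply,
    AlgHom.toLinearMap_apply, fstHom_apply, sndHom_apply, fst_add, fst_inl, fst_inr,
    snd_add, snd_inl, snd_inr, add_zero, zero_add, map_zero, map_smul, smul_eq_mul,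
    cf_val0, cf_val1, cf_val2, cf_val3]
  all_goals norm_num

lemma Ev_Lc_ts : Lc K (psi K (tee K * ess K)) = 0 := by
  rw [psivts]
  simp only [La, Lb, Lc, Ld, Le, DualNumber.eps, LinearMap.comp_apply, LinearMap.fst_apply,
    LinearMap.snd_apply, LinearMap.restrictScalars_apply, LinearMap.sub_apply, LinearMap.smul_apply,
    AlgHom.toLinearMap_apply, fstHom_apply, sndHom_apply, fst_add, fst_inl, fst_inr,
    snd_add, snd_inl, snd_inr, add_zero, zero_add, map_zero, map_smul, smul_eq_mul,
    cf_val0, cf_val1, cf_val2, cf_val3]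
  all_goals norm_num

lemma Ev_Lc_t3 : Lc K (psi K (tee K ^ 3)) = 0 := by
  rw [psivt3]
  simp only [La, Lb, Lc, Ld, Le, DualNumber.eps, LinearMap.comp_apply, LinearMap.fst_apply,
    LinearMap.snd_apply, LinearMap.restrictScalars_apply, LinearMap.sub_apply, LinearMap.smul_apply,
    AlgHom.toLinearMap_apply, fstHom_apply, sndHom_apply, fst_add, fst_inl, fst_inr,
    snd_add, snd_inl, snd_inr, add_zero, zero_add, map_zero, map_smul, smul_eq_mul,
    cf_val0, cf_val1, cf_val2, cf_val3]
  all_goals norm_num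

lemma Ev_Lc_t4 : Lc K (psi K (tee K ^ 4)) = 0 := by
  rw [psivt4]
  simp only [La, Lb, Lc, Ld, Le, DualNumber.eps, LinearMap.comp_apply, LinearMap.fst_apply,
    LinearMap.snd_apply, LinearMap.restrictScalars_apply, LinearMap.sub_apply, LinearMap.smul_apply,
    AlgHom.toLinearMap_apply, fstHom_apply, sndHom_apply, fst_add, fst_inl, fst_inr,
    snd_add, snd_inl, snd_inr, add_zero, zero_add, map_zero, map_smul, smul_eq_mul,
    cf_val0, cf_val1, cf_val2, cf_val3]
  all_goals norm_num

lemma Ev_La1_t : La K 1 (psi K (tee K)) = 1 := by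
  rw [psivt]
  simp only [La, Lb, Lc, Ld, Le, DualNumber.eps, LinearMap.comp_apply, LinearMap.fst_apply,
    LinearMap.snd_apply, LinearMap.restrictScalars_apply, LinearMap.sub_apply, LinearMap.smul_apply,
    AlgHom.toLinearMap_apply, fstHom_apply, sndHom_apply, fst_add, fst_inl, fst_inr,
    snd_add, snd_inl, snd_inr, add_zero, zero_add, map_zero, map_smul, smul_eq_mul,
    cf_val0, cf_val1, cf_val2, cf_val3]
  all_goals norm_num

lemma Ev_La1_s : La K 1 (psi K (ess K)) = 0 := by
  rw [psivs]
  simp only [La, Lb, Lc, Ld, Le, DualNumber.eps, LinearMap.comp_apply, LinearMap.fst_apply,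
    LinearMap.snd_apply, LinearMap.restrictScalars_apply, LinearMap.sub_apply, LinearMap.smul_apply,
    AlgHom.toLinearMap_apply, fstHom_apply, sndHom_apply, fst_add, fst_inl, fst_inr,
    snd_add, snd_inl, snd_inr, add_zero, zero_add, map_zero, map_smul, smul_eq_mul,
    cf_val0, cf_val1, cf_val2, cf_val3]
  all_goals norm_num

lemma Ev_La1_t2 : La K 1 (psi K (tee K ^ 2)) = 0 := by
  rw [psivt2]
  simp only [La, Lb, Lc, Ld, Le, DualNumber.eps, LinearMap.comp_apply, LinearMap.fst_apply,
    LinearMap.snd_apply, LinearMap.restrictScalars_apply, LinearMap.sub_apply, LinearMap.smul_apply,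
    AlgHom.toLinearMap_apply, fstHom_apply, sndHom_apply, fst_add, fst_inl, fst_inr,
    snd_add, snd_inl, snd_inr, add_zero, zero_add, map_zero, map_smul, smul_eq_mul,
    cf_val0, cf_val1, cf_val2, cf_val3]
  all_goals norm_num

lemma Ev_La1_ts : La K 1 (psi K (tee K * ess K)) = 0 := by
  rw [psivts]
  simp only [La, Lb, Lc, Ld, Le, DualNumber.eps, LinearMap.comp_apply, LinearMap.fst_apply,
    LinearMap.snd_apply, LinearMap.restrictScalars_apply, LinearMap.sub_apply, LinearMap.smul_apply,
    AlgHom.toLinearMap_apply, fstHom_apply, sndHom_apply, fst_add, fst_inl, fst_inr,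
    snd_add, snd_inl, snd_inr, add_zero, zero_add, map_zero, map_smul, smul_eq_mul,
    cf_val0, cf_val1, cf_val2, cf_val3]
  all_goals norm_num

lemma Ev_La1_t3 : La K 1 (psi K (tee K ^ 3)) = 0 := by
  rw [psivt3]
  simp only [La, Lb, Lc, Ld, Le, DualNumber.eps, LinearMap.comp_apply, LinearMap.fst_apply,
    LinearMap.snd_apply, LinearMap.restrictScalars_apply, LinearMap.sub_apply, LinearMap.smul_apply,
    AlgHom.toLinearMap_apply, fstHom_apply, sndHom_apply, fst_add, fst_inl, fst_inr,
    snd_add, snd_inl, snd_inr, add_zero, zero_add, map_zero, map_smul, smul_eq_mul,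
    cf_val0, cf_val1, cf_val2, cf_val3]
  all_goals norm_num

lemma Ev_La1_t4 : La K 1 (psi K (tee K ^ 4)) = 0 := by
  rw [psivt4]
  simp only [La, Lb, Lc, Ld, Le, DualNumber.eps, LinearMap.comp_apply, LinearMap.fst_apply,
    LinearMap.snd_apply, LinearMap.restrictScalars_apply, LinearMap.sub_apply, LinearMap.smul_apply,
    AlgHom.toLinearMap_apply, fstHom_apply, sndHom_apply, fst_add, fst_inl, fst_inr,
    snd_add, snd_inl, snd_inr, add_zero, zero_add, map_zero, map_smul, smul_eq_mul,
    cf_val0, cf_val1, cf_val2, cf_val3]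
  all_goals norm_num

lemma Ev_Ld_t : Ld K (psi K (tee K)) = 0 := by
  rw [psivt]
  simp only [La, Lb, Lc, Ld, Le, DualNumber.eps, LinearMap.comp_apply, LinearMap.fst_apply,
    LinearMap.snd_apply, LinearMap.restrictScalars_apply, LinearMap.sub_apply, LinearMap.smul_apply,
    AlgHom.toLinearMap_apply, fstHom_apply, sndHom_apply, fst_add, fst_inl, fst_inr,
    snd_add, snd_inl, snd_inr, add_zero, zero_add, map_zero, map_smul, smul_eq_mul,
    cf_val0, cf_val1, cf_val2, cf_val3]
  all_goals norm_num

lemma Ev_Ld_s : Ld K (psi K (ess K)) = 1 := by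
  rw [psivs]
  simp only [La, Lb, Lc, Ld, Le, DualNumber.eps, LinearMap.comp_apply, LinearMap.fst_apply,
    LinearMap.snd_apply, LinearMap.restrictScalars_apply, LinearMap.sub_apply, LinearMap.smul_apply,
    AlgHom.toLinearMap_apply, fstHom_apply, sndHom_apply, fst_add, fst_inl, fst_inr,
    snd_add, snd_inl, snd_inr, add_zero, zero_add, map_zero, map_smul, smul_eq_mul,
    cf_val0, cf_val1, cf_val2, cf_val3]
  all_goals norm_num

lemma Ev_Ld_t2 : Ld K (psi K (tee K ^ 2)) = 0 := by
  rw [psivt2]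
  simp only [La, Lb, Lc, Ld, Le, DualNumber.eps, LinearMap.comp_apply, LinearMap.fst_apply,
    LinearMap.snd_apply, LinearMap.restrictScalars_apply, LinearMap.sub_apply, LinearMap.smul_apply,
    AlgHom.toLinearMap_apply, fstHom_apply, sndHom_apply, fst_add, fst_inl, fst_inr,
    snd_add, snd_inl, snd_inr, add_zero, zero_add, map_zero, map_smul, smul_eq_mul,
    cf_val0, cf_val1, cf_val2, cf_val3]
  all_goals norm_num

lemma Ev_Ld_ts : Ld K (psi K (tee K * ess K)) = 0 := by
  rw [psivts]
  simp only [La, Lb, Lc, Ld, Le, DualNumber.eps, LinearMap.comp_apply, LinearMap.fst_apply,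
    LinearMap.snd_apply, LinearMap.restrictScalars_apply, LinearMap.sub_apply, LinearMap.smul_apply,
    AlgHom.toLinearMap_apply, fstHom_apply, sndHom_apply, fst_add, fst_inl, fst_inr,
    snd_add, snd_inl, snd_inr, add_zero, zero_add, map_zero, map_smul, smul_eq_mul,
    cf_val0, cf_val1, cf_val2, cf_val3]
  all_goals norm_num

lemma Ev_Ld_t3 : Ld K (psi K (tee K ^ 3)) = 0 := by
  rw [psivt3]
  simp only [La, Lb, Lc, Ld, Le, DualNumber.eps, LinearMap.comp_apply, LinearMap.fst_apply,
    LinearMap.snd_apply, LinearMap.restrictScalars_apply, LinearMap.sub_apply, LinearMap.smul_apply,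
    AlgHom.toLinearMap_apply, fstHom_apply, sndHom_apply, fst_add, fst_inl, fst_inr,
    snd_add, snd_inl, snd_inr, add_zero, zero_add, map_zero, map_smul, smul_eq_mul,
    cf_val0, cf_val1, cf_val2, cf_val3]
  all_goals norm_num

lemma Ev_Ld_t4 : Ld K (psi K (tee K ^ 4)) = 0 := by
  rw [psivt4]
  simp only [La, Lb, Lc, Ld, Le, DualNumber.eps, LinearMap.comp_apply, LinearMap.fst_apply,
    LinearMap.snd_apply, LinearMap.restrictScalars_apply, LinearMap.sub_apply, LinearMap.smul_apply,
    AlgHom.toLinearMap_apply, fstHom_apply, sndHom_apply, fst_add, fst_inl, fst_inr,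
    snd_add, snd_inl, snd_inr, add_zero, zero_add, map_zero, map_smul, smul_eq_mul,
    cf_val0, cf_val1, cf_val2, cf_val3]
  all_goals norm_num

lemma Ev_La2_t2 : La K 2 (psi K (tee K ^ 2)) = 1 := by
  rw [psivt2]
  simp only [La, Lb, Lc, Ld, Le, DualNumber.eps, LinearMap.comp_apply, LinearMap.fst_apply,
    LinearMap.snd_apply, LinearMap.restrictScalars_apply, LinearMap.sub_apply, LinearMap.smul_apply,
    AlgHom.toLinearMap_apply, fstHom_apply, sndHom_apply, fst_add, fst_inl, fst_inr,
    snd_add, snd_inl, snd_inr, add_zero, zero_add, map_zero, map_smul, smul_eq_mul,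
    cf_val0, cf_val1, cf_val2, cf_val3]
  all_goals norm_num

lemma Ev_La2_ts : La K 2 (psi K (tee K * ess K)) = 0 := by
  rw [psivts]
  simp only [La, Lb, Lc, Ld, Le, DualNumber.eps, LinearMap.comp_apply, LinearMap.fst_apply,
    LinearMap.snd_apply, LinearMap.restrictScalars_apply, LinearMap.sub_apply, LinearMap.smul_apply,
    AlgHom.toLinearMap_apply, fstHom_apply, sndHom_apply, fst_add, fst_inl, fst_inr,
    snd_add, snd_inl, snd_inr, add_zero, zero_add, map_zero, map_smul, smul_eq_mul,
    cf_val0, cf_val1, cf_val2, cf_val3]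
  all_goals norm_num

lemma Ev_La2_t3 : La K 2 (psi K (tee K ^ 3)) = 0 := by
  rw [psivt3]
  simp only [La, Lb, Lc, Ld, Le, DualNumber.eps, LinearMap.comp_apply, LinearMap.fst_apply,
    LinearMap.snd_apply, LinearMap.restrictScalars_apply, LinearMap.sub_apply, LinearMap.smul_apply,
    AlgHom.toLinearMap_apply, fstHom_apply, sndHom_apply, fst_add, fst_inl, fst_inr,
    snd_add, snd_inl, snd_inr, add_zero, zero_add, map_zero, map_smul, smul_eq_mul,
    cf_val0, cf_val1, cf_val2, cf_val3]
  all_goals norm_num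

lemma Ev_La2_t4 : La K 2 (psi K (tee K ^ 4)) = 0 := by
  rw [psivt4]
  simp only [La, Lb, Lc, Ld, Le, DualNumber.eps, LinearMap.comp_apply, LinearMap.fst_apply,
    LinearMap.snd_apply, LinearMap.restrictScalars_apply, LinearMap.sub_apply, LinearMap.smul_apply,
    AlgHom.toLinearMap_apply, fstHom_apply, sndHom_apply, fst_add, fst_inl, fst_inr,
    snd_add, snd_inl, snd_inr, add_zero, zero_add, map_zero, map_smul, smul_eq_mul,
    cf_val0, cf_val1, cf_val2, cf_val3]
  all_goals norm_num

lemma Ev_Le_t2 : Le K (psi K (tee K ^ 2)) = 0 := by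
  rw [psivt2]
  simp only [La, Lb, Lc, Ld, Le, DualNumber.eps, LinearMap.comp_apply, LinearMap.fst_apply,
    LinearMap.snd_apply, LinearMap.restrictScalars_apply, LinearMap.sub_apply, LinearMap.smul_apply,
    AlgHom.toLinearMap_apply, fstHom_apply, sndHom_apply, fst_add, fst_inl, fst_inr,
    snd_add, snd_inl, snd_inr, add_zero, zero_add, map_zero, map_smul, smul_eq_mul,
    cf_val0, cf_val1, cf_val2, cf_val3]
  all_goals norm_num

lemma Ev_Le_ts : Le K (psi K (tee K * ess K)) = 4 := by
  rw [psivts]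
  simp only [La, Lb, Lc, Ld, Le, DualNumber.eps, LinearMap.comp_apply, LinearMap.fst_apply,
    LinearMap.snd_apply, LinearMap.restrictScalars_apply, LinearMap.sub_apply, LinearMap.smul_apply,
    AlgHom.toLinearMap_apply, fstHom_apply, sndHom_apply, fst_add, fst_inl, fst_inr,
    snd_add, snd_inl, snd_inr, add_zero, zero_add, map_zero, map_smul, smul_eq_mul,
    cf_val0, cf_val1, cf_val2, cf_val3]
  all_goals norm_num

lemma Ev_Le_t3 : Le K (psi K (tee K ^ 3)) = 0 := by
  rw [psivt3]
  simp only [La, Lb, Lc, Ld, Le, DualNumber.eps, LinearMap.comp_apply, LinearMap.fst_apply,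
    LinearMap.snd_apply, LinearMap.restrictScalars_apply, LinearMap.sub_apply, LinearMap.smul_apply,
    AlgHom.toLinearMap_apply, fstHom_apply, sndHom_apply, fst_add, fst_inl, fst_inr,
    snd_add, snd_inl, snd_inr, add_zero, zero_add, map_zero, map_smul, smul_eq_mul,
    cf_val0, cf_val1, cf_val2, cf_val3]
  all_goals norm_num

lemma Ev_Le_t4 : Le K (psi K (tee K ^ 4)) = 0 := by
  rw [psivt4]
  simp only [La, Lb, Lc, Ld, Le, DualNumber.eps, LinearMap.comp_apply, LinearMap.fst_apply,
    LinearMap.snd_apply, LinearMap.restrictScalars_apply, LinearMap.sub_apply, LinearMap.smul_apply,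
    AlgHom.toLinearMap_apply, fstHom_apply, sndHom_apply, fst_add, fst_inl, fst_inr,
    snd_add, snd_inl, snd_inr, add_zero, zero_add, map_zero, map_smul, smul_eq_mul,
    cf_val0, cf_val1, cf_val2, cf_val3]
  all_goals norm_num

lemma Ev_La3_t3 : La K 3 (psi K (tee K ^ 3)) = 1 := by
  rw [psivt3]
  simp only [La, Lb, Lc, Ld, Le, DualNumber.eps, LinearMap.comp_apply, LinearMap.fst_apply,
    LinearMap.snd_apply, LinearMap.restrictScalars_apply, LinearMap.sub_apply, LinearMap.smul_apply,
    AlgHom.toLinearMap_apply, fstHom_apply, sndHom_apply, fst_add, fst_inl, fst_inr,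
    snd_add, snd_inl, snd_inr, add_zero, zero_add, map_zero, map_smul, smul_eq_mul,
    cf_val0, cf_val1, cf_val2, cf_val3]
  all_goals norm_num

lemma Ev_La3_t4 : La K 3 (psi K (tee K ^ 4)) = 0 := by
  rw [psivt4]
  simp only [La, Lb, Lc, Ld, Le, DualNumber.eps, LinearMap.comp_apply, LinearMap.fst_apply,
    LinearMap.snd_apply, LinearMap.restrictScalars_apply, LinearMap.sub_apply, LinearMap.smul_apply,
    AlgHom.toLinearMap_apply, fstHom_apply, sndHom_apply, fst_add, fst_inl, fst_inr,
    snd_add, snd_inl, snd_inr, add_zero, zero_add, map_zero, map_smul, smul_eq_mul,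
    cf_val0, cf_val1, cf_val2, cf_val3]
  all_goals norm_num

lemma Ev_Lb3_t4 : Lb K 3 (psi K (tee K ^ 4)) = 4 := by
  rw [psivt4]
  simp only [La, Lb, Lc, Ld, Le, DualNumber.eps, LinearMap.comp_apply, LinearMap.fst_apply,
    LinearMap.snd_apply, LinearMap.restrictScalars_apply, LinearMap.sub_apply, LinearMap.smul_apply,
    AlgHom.toLinearMap_apply, fstHom_apply, sndHom_apply, fst_add, fst_inl, fst_inr,
    snd_add, snd_inl, snd_inr, add_zero, zero_add, map_zero, map_smul, smul_eq_mul,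
    cf_val0, cf_val1, cf_val2, cf_val3]
  all_goals norm_num


abbrev Fc : AA K →ₗ[K] K := Lc K ∘ₗ (psi K).toLinearMap
abbrev Fa (j : ℕ) : AA K →ₗ[K] K := La K j ∘ₗ (psi K).toLinearMap
abbrev Fb (j : ℕ) : AA K →ₗ[K] K := Lb K j ∘ₗ (psi K).toLinearMap
abbrev Fd : AA K →ₗ[K] K := Ld K ∘ₗ (psi K).toLinearMap
abbrev Fe : AA K →ₗ[K] K := Le K ∘ₗ (psi K).toLinearMap

lemma vanish_span (S : Set (AA K)) (F : AA K →ₗ[K] K) (h : ∀ g ∈ S, F g = 0) :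
    ∀ x ∈ Submodule.span K S, F x = 0 := by
  intro x hx
  have hle : Submodule.span K S ≤ LinearMap.ker F :=
    Submodule.span_le.mpr fun g hg => LinearMap.mem_ker.mpr (h g hg)
  exact LinearMap.mem_ker.mp (hle hx)

lemma vanc : ∀ x ∈ Submodule.span K (S1 K), Fc K x = 0 := by
  refine vanish_span K _ _ ?_
  intro g hg
  rcases hg with rfl | rfl | rfl | rfl | rfl | rfl
  · exact Ev_Lc_t K
  · exact Ev_Lc_s K
  · exact Ev_Lc_t2 K
  · exact Ev_Lc_ts K
  · exact Ev_Lc_t3 K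
  · exact Ev_Lc_t4 K

lemma vana1 : ∀ x ∈ Submodule.span K (S2 K), Fa K 1 x = 0 := by
  refine vanish_span K _ _ ?_
  intro g hg
  rcases hg with rfl | rfl | rfl | rfl
  · exact Ev_La1_t2 K
  · exact Ev_La1_ts K
  · exact Ev_La1_t3 K
  · exact Ev_La1_t4 K

lemma vand : ∀ x ∈ Submodule.span K (S2 K), Fd K x = 0 := by
  refine vanish_span K _ _ ?_
  intro g hg
  rcases hg with rfl | rfl | rfl | rfl
  · exact Ev_Ld_t2 K
  · exact Ev_Ld_ts K
  · exact Ev_Ld_t3 K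
  · exact Ev_Ld_t4 K

lemma vana2 : ∀ x ∈ Submodule.span K (S3 K), Fa K 2 x = 0 := by
  refine vanish_span K _ _ ?_
  intro g hg
  rcases hg with rfl | rfl
  · exact Ev_La2_t3 K
  · exact Ev_La2_t4 K

lemma vane : ∀ x ∈ Submodule.span K (S3 K), Fe K x = 0 := by
  refine vanish_span K _ _ ?_
  intro g hg
  rcases hg with rfl | rfl
  · exact Ev_Le_t3 K
  · exact Ev_Le_t4 K

lemma vana3 : ∀ x ∈ Submodule.span K (S4 K), Fa K 3 x = 0 := by
  refine vanish_span K _ _ ?_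
  intro g hg
  rcases hg with rfl
  exact Ev_La3_t4 K

-- ideal memberships used to kill generators in quotients
lemma M1_t2 : tee K ^ 2 ∈ mm K := by rw [pow_two]; exact Ideal.mul_mem_left _ _ (ht_mm K)
lemma M1_ts : tee K * ess K ∈ mm K := Ideal.mul_mem_left _ _ (hs_mm K)
lemma M1_t3 : tee K ^ 3 ∈ mm K := by rw [pow_succ]; exact Ideal.mul_mem_left _ _ (ht_mm K)
lemma M1_t4 : tee K ^ 4 ∈ mm K := by rw [pow_succ]; exact Ideal.mul_mem_left _ _ (ht_mm K)
lemma M2_t2 : tee K ^ 2 ∈ mm K ^ 2 := Ideal.pow_mem_pow (ht_mm K) 2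
lemma M2_ts : tee K * ess K ∈ mm K ^ 2 := by
  rw [pow_two]; exact Ideal.mul_mem_mul (ht_mm K) (hs_mm K)
lemma M3_t3 : tee K ^ 3 ∈ mm K ^ 3 := Ideal.pow_mem_pow (ht_mm K) 3
lemma M4_t4 : tee K ^ 4 ∈ mm K ^ 4 := Ideal.pow_mem_pow (ht_mm K) 4
lemma M2_t3 : tee K ^ 3 ∈ mm K ^ 2 := Ideal.pow_le_pow_right (by norm_num) (M3_t3 K)
lemma M2_t4 : tee K ^ 4 ∈ mm K ^ 2 := Ideal.pow_le_pow_right (by norm_num) (M4_t4 K)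
lemma M3_t4 : tee K ^ 4 ∈ mm K ^ 3 := Ideal.pow_le_pow_right (by norm_num) (M4_t4 K)

-- killing lemmas: mkQ of generator is 0
lemma kill (n : ℕ) (g : AA K) (hg : g ∈ mm K ^ n) :
    (Submodule.restrictScalars K (mm K ^ n)).mkQ g = 0 := by
  rw [Submodule.mkQ_apply, Submodule.Quotient.mk_eq_zero, Submodule.restrictScalars_mem]
  exact hg

lemma hs0 : Module.finrank K
    (Submodule.map (Submodule.restrictScalars K (mm K ^ 1)).mkQ
      (Submodule.restrictScalars K (mm K ^ 0))) = 1 := by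
  rw [hK0, Submodule.map_span]
  have himg : Submodule.span K ((Submodule.restrictScalars K (mm K ^ 1)).mkQ '' S0 K) =
      Submodule.span K {(Submodule.restrictScalars K (mm K ^ 1)).mkQ 1} := by
    apply le_antisymm
    · rw [Submodule.span_le]
      rintro v ⟨g, hg, rfl⟩
      rcases hg with rfl | rfl | rfl | rfl | rfl | rfl | rfl
      · exact Submodule.subset_span rfl
      · rw [SetLike.mem_coe, kill K 1 (tee K) (by simpa using ht_mm K)]; exact zero_mem _
      · rw [SetLike.mem_coe, kill K 1 (ess K) (by simpa using hs_mm K)]; exact zero_mem _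
      · rw [SetLike.mem_coe, kill K 1 (tee K ^ 2) (by simpa using M1_t2 K)]; exact zero_mem _
      · rw [SetLike.mem_coe, kill K 1 (tee K * ess K) (by simpa using M1_ts K)]; exact zero_mem _
      · rw [SetLike.mem_coe, kill K 1 (tee K ^ 3) (by simpa using M1_t3 K)]; exact zero_mem _
      · rw [SetLike.mem_coe, kill K 1 (tee K ^ 4) (by simpa using M1_t4 K)]; exact zero_mem _
    · rw [Submodule.span_le]
      rintro v hv
      rw [Set.mem_singleton_iff] at hv
      subst hv
      exact Submodule.subset_span ⟨1, memS0_one K, rfl⟩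
  rw [himg]
  refine finrank_span_singleton ?_
  intro h
  rw [Submodule.mkQ_apply, Submodule.Quotient.mk_eq_zero, Submodule.restrictScalars_mem,
    pow_one] at h
  have h1 := vanc K 1 (L1 K 1 h)
  rw [LinearMap.comp_apply, AlgHom.toLinearMap_apply, Ev_Lc_one K] at h1
  exact one_ne_zero h1

lemma pairfr {M : Type*} [AddCommGroup M] [Module K M] (v w : M)
    (hli : LinearIndependent K ![v, w]) :
    Module.finrank K (Submodule.span K ({v, w} : Set M)) = 2 := by
  have h : ({v, w} : Set M) = Set.range ![v, w] := by
    simp only [Matrix.range_cons, Matrix.range_empty, Set.union_empty, Set.union_singleton]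
    exact Set.pair_comm v w
  rw [h, finrank_span_eq_card hli, Fintype.card_fin]

lemma hs1 : Module.finrank K
    (Submodule.map (Submodule.restrictScalars K (mm K ^ 2)).mkQ
      (Submodule.restrictScalars K (mm K ^ 1))) = 2 := by
  rw [hK1, Submodule.map_span]
  have himg : Submodule.span K ((Submodule.restrictScalars K (mm K ^ 2)).mkQ '' S1 K) =
      Submodule.span K {(Submodule.restrictScalars K (mm K ^ 2)).mkQ (tee K),
        (Submodule.restrictScalars K (mm K ^ 2)).mkQ (ess K)} := by
    apply le_antisymm
    · rw [Submodule.span_le]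
      rintro v ⟨g, hg, rfl⟩
      rcases hg with rfl | rfl | rfl | rfl | rfl | rfl
      · exact Submodule.subset_span (Or.inl rfl)
      · exact Submodule.subset_span (Or.inr rfl)
      · rw [SetLike.mem_coe, kill K 2 (tee K ^ 2) (M2_t2 K)]; exact zero_mem _
      · rw [SetLike.mem_coe, kill K 2 (tee K * ess K) (M2_ts K)]; exact zero_mem _
      · rw [SetLike.mem_coe, kill K 2 (tee K ^ 3) (M2_t3 K)]; exact zero_mem _
      · rw [SetLike.mem_coe, kill K 2 (tee K ^ 4) (M2_t4 K)]; exact zero_mem _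
    · rw [Submodule.span_le]
      rintro v hv
      rcases hv with rfl | rfl
      · exact Submodule.subset_span ⟨tee K, memS1_t K, rfl⟩
      · exact Submodule.subset_span ⟨ess K, memS1_s K, rfl⟩
  rw [himg]
  refine pairfr K _ _ ?_
  rw [LinearIndependent.pair_iff]
  intro a b hab
  have hmem : a • tee K + b • ess K ∈ mm K ^ 2 := by
    have hq : (Submodule.restrictScalars K (mm K ^ 2)).mkQ (a • tee K + b • ess K) = 0 := by
      rw [map_add, map_smul, map_smul]; exact hab
    rwa [Submodule.mkQ_apply, Submodule.Quotient.mk_eq_zero,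
      Submodule.restrictScalars_mem] at hq
  have hspan := L2 K _ hmem
  have e1 := vana1 K _ hspan
  have e2 := vand K _ hspan
  rw [map_add, map_smul, map_smul] at e1 e2
  have v1 : Fa K 1 (tee K) = 1 := Ev_La1_t K
  have v2 : Fa K 1 (ess K) = 0 := Ev_La1_s K
  have w1 : Fd K (tee K) = 0 := Ev_Ld_t K
  have w2 : Fd K (ess K) = 1 := Ev_Ld_s K
  rw [v1, v2] at e1
  rw [w1, w2] at e2
  constructor
  · simpa using e1
  · simpa using e2

lemma hs2 [CharZero K] : Module.finrank K
    (Submodule.map (Submodule.restrictScalars K (mm K ^ 3)).mkQ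
      (Submodule.restrictScalars K (mm K ^ 2))) = 2 := by
  rw [hK2, Submodule.map_span]
  have himg : Submodule.span K ((Submodule.restrictScalars K (mm K ^ 3)).mkQ '' S2 K) =
      Submodule.span K {(Submodule.restrictScalars K (mm K ^ 3)).mkQ (tee K ^ 2),
        (Submodule.restrictScalars K (mm K ^ 3)).mkQ (tee K * ess K)} := by
    apply le_antisymm
    · rw [Submodule.span_le]
      rintro v ⟨g, hg, rfl⟩
      rcases hg with rfl | rfl | rfl | rfl
      · exact Submodule.subset_span (Or.inl rfl)
      · exact Submodule.subset_span (Or.inr rfl)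
      · rw [SetLike.mem_coe, kill K 3 (tee K ^ 3) (M3_t3 K)]; exact zero_mem _
      · rw [SetLike.mem_coe, kill K 3 (tee K ^ 4) (M3_t4 K)]; exact zero_mem _
    · rw [Submodule.span_le]
      rintro v hv
      rcases hv with rfl | rfl
      · exact Submodule.subset_span ⟨tee K ^ 2, memS2_t2 K, rfl⟩
      · exact Submodule.subset_span ⟨tee K * ess K, memS2_ts K, rfl⟩
  rw [himg]
  refine pairfr K _ _ ?_
  rw [LinearIndependent.pair_iff]
  intro a b hab
  have hmem : a • tee K ^ 2 + b • (tee K * ess K) ∈ mm K ^ 3 := by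
    have hq : (Submodule.restrictScalars K (mm K ^ 3)).mkQ
        (a • tee K ^ 2 + b • (tee K * ess K)) = 0 := by
      rw [map_add, map_smul, map_smul]; exact hab
    rwa [Submodule.mkQ_apply, Submodule.Quotient.mk_eq_zero,
      Submodule.restrictScalars_mem] at hq
  have hspan := L3 K _ hmem
  have e1 := vana2 K _ hspan
  have e2 := vane K _ hspan
  rw [map_add, map_smul, map_smul] at e1 e2
  have v1 : Fa K 2 (tee K ^ 2) = 1 := Ev_La2_t2 K
  have v2 : Fa K 2 (tee K * ess K) = 0 := Ev_La2_ts K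
  have w1 : Fe K (tee K ^ 2) = 0 := Ev_Le_t2 K
  have w2 : Fe K (tee K * ess K) = 4 := Ev_Le_ts K
  rw [v1, v2] at e1
  rw [w1, w2] at e2
  constructor
  · simpa using e1
  · have : b * 4 = 0 := by simpa [smul_eq_mul] using e2
    have h4 : (4 : K) ≠ 0 := by norm_num
    exact (mul_eq_zero.mp this).resolve_right h4

lemma hs3 : Module.finrank K
    (Submodule.map (Submodule.restrictScalars K (mm K ^ 4)).mkQ
      (Submodule.restrictScalars K (mm K ^ 3))) = 1 := by
  rw [hK3, Submodule.map_span]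
  have himg : Submodule.span K ((Submodule.restrictScalars K (mm K ^ 4)).mkQ '' S3 K) =
      Submodule.span K {(Submodule.restrictScalars K (mm K ^ 4)).mkQ (tee K ^ 3)} := by
    apply le_antisymm
    · rw [Submodule.span_le]
      rintro v ⟨g, hg, rfl⟩
      rcases hg with rfl | rfl
      · exact Submodule.subset_span rfl
      · rw [SetLike.mem_coe, kill K 4 (tee K ^ 4) (M4_t4 K)]; exact zero_mem _
    · rw [Submodule.span_le]
      rintro v hv
      rw [Set.mem_singleton_iff] at hv
      subst hv
      exact Submodule.subset_span ⟨tee K ^ 3, memS3_t3 K, rfl⟩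
  rw [himg]
  refine finrank_span_singleton ?_
  intro h
  rw [Submodule.mkQ_apply, Submodule.Quotient.mk_eq_zero, Submodule.restrictScalars_mem] at h
  have h1 := vana3 K _ (L4 K _ h)
  have v1 : Fa K 3 (tee K ^ 3) = 1 := Ev_La3_t3 K
  rw [v1] at h1
  exact one_ne_zero h1

lemma hs4 [CharZero K] : Module.finrank K
    (Submodule.map (Submodule.restrictScalars K (mm K ^ 5)).mkQ
      (Submodule.restrictScalars K (mm K ^ 4))) = 1 := by
  rw [hK4, Submodule.map_span]
  have himg : ((Submodule.restrictScalars K (mm K ^ 5)).mkQ '' S4 K) =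
      {(Submodule.restrictScalars K (mm K ^ 5)).mkQ (tee K ^ 4)} := Set.image_singleton
  rw [himg]
  refine finrank_span_singleton ?_
  intro h
  rw [Submodule.mkQ_apply, Submodule.Quotient.mk_eq_zero, Submodule.restrictScalars_mem] at h
  have hsp := L5 K _ h
  have h1 : Fb K 3 (tee K ^ 4) = 0 := by
    refine vanish_span K (S5 K) (Fb K 3) ?_ _ hsp
    intro g hg
    exact absurd hg (Set.notMem_empty g)
  have v1 : Fb K 3 (tee K ^ 4) = 4 := Ev_Lb3_t4 K
  rw [v1] at h1
  norm_num at h1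

end
end Stmt15

/-- The Hilbert–Samuel sequence of `A = K[t,s]/(t⁵, t⁴ − t²s, s²)` with maximal ideal `m = (t,s)`
is `(1, 2, 2, 1, 1)`, and `m⁵ = 0`. -/
theorem stmt_15 (K : Type*) [Field K] [CharZero K]
    (I : Ideal (MvPolynomial (Fin 2) K))
    (hI : I = Ideal.span {X 0 ^ 5, X 0 ^ 4 - X 0 ^ 2 * X 1, X 1 ^ 2})
    (m : Ideal (MvPolynomial (Fin 2) K ⧸ I))
    (hm : m = Ideal.span {Ideal.Quotient.mk I (X 0), Ideal.Quotient.mk I (X 1)})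
    (HS : ℕ → ℕ)
    (hHS : ∀ i : ℕ, HS i = Module.finrank K
      (Submodule.map (((m ^ (i + 1)).restrictScalars K).mkQ)
        ((m ^ i).restrictScalars K))) :
    HS 0 = 1 ∧ HS 1 = 2 ∧ HS 2 = 2 ∧ HS 3 = 1 ∧ HS 4 = 1 ∧ m ^ 5 = ⊥ := by
  subst hI
  subst hm
  refine ⟨?_, ?_, ?_, ?_, ?_, ?_⟩
  · rw [hHS 0]; exact Stmt15.hs0 K
  · rw [hHS 1]; exact Stmt15.hs1 K
  · rw [hHS 2]; exact Stmt15.hs2 K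
  · rw [hHS 3]; exact Stmt15.hs3 K
  · rw [hHS 4]; exact Stmt15.hs4 K
  · exact Stmt15.mm_pow5 K
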